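/- Let G be a complex m×n matrix, b ∈ ℂⁿ, let w(t) = exp(t M)(b, 0) with blocks (r(t), s(t)), and let x(t) = ∫₀ᵗ r(τ) dτ. Then for every t ≥ 0 the algebraic residual identity b − Gᴴ G x(t) = r(t) − Gᴴ s(t) holds; equivalently, with q(t) := G x(t) − s(t), one has r(t) = b − Gᴴ q(t) and s(t) = G x(t) − q(t) for all t ≥ 0. -/

import Mathlib

open scoped Matrix ComplexInnerProductSpace
open Filter MeasureTheory

noncomputable section

/-- `ℂ^k` with the ℓ² norm. -/
abbrev Evec (k : ℕ) : Type := EuclideanSpace ℂ (Fin k)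

/-- The joint space `ℂⁿ ⊕ ℂᵐ` with the ℓ² norm. -/
abbrev Jvec (n m : ℕ) : Type := EuclideanSpace ℂ (Fin n ⊕ Fin m)

/-- A complex matrix viewed as a continuous linear map between Euclidean spaces,
so that `‖matCLM A‖` is the induced ℓ² operator norm. -/
noncomputable def matCLM {α β : Type*} [Fintype α] [Fintype β] [DecidableEq β]
    (A : Matrix α β ℂ) : EuclideanSpace ℂ β →L[ℂ] EuclideanSpace ℂ α :=
  LinearMap.toContinuousLinearMap (Matrix.toEuclideanLin A)

/-- The block matrix `M = [[0, -Gᴴ], [G, -I]]` on `ℂⁿ ⊕ ℂᵐ`. -/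
def blockM {m n : ℕ} (G : Matrix (Fin m) (Fin n) ℂ) :
    Matrix (Fin n ⊕ Fin m) (Fin n ⊕ Fin m) ℂ :=
  Matrix.fromBlocks 0 (-Gᴴ) G (-1)

/-- The matrix exponential `exp (t M)` as a continuous linear map on `ℂⁿ ⊕ ℂᵐ`. -/
noncomputable def expM {m n : ℕ} (G : Matrix (Fin m) (Fin n) ℂ) (t : ℝ) :
    Jvec n m →L[ℂ] Jvec n m :=
  NormedSpace.exp (t • matCLM (blockM G))

/-- Join two blocks into a joint vector. -/
def joinV {n m : ℕ} (r : Evec n) (s : Evec m) : Jvec n m :=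
  (WithLp.equiv 2 _).symm (Sum.elim ((WithLp.equiv 2 _) r) ((WithLp.equiv 2 _) s))

/-- First (residual `r`) block of a joint vector. -/
def rblock {n m : ℕ} (w : Jvec n m) : Evec n :=
  (WithLp.equiv 2 _).symm fun i => w (Sum.inl i)

/-- Second (residual `s`) block of a joint vector. -/
def sblock {n m : ℕ} (w : Jvec n m) : Evec m :=
  (WithLp.equiv 2 _).symm fun j => w (Sum.inr j)

/-- Residual dynamics `w(t) = exp (t M) (b, 0)`. -/
noncomputable def wdyn {m n : ℕ} (G : Matrix (Fin m) (Fin n) ℂ) (b : Evec n) (t : ℝ) :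
    Jvec n m :=
  expM G t (joinV b 0)

/-- Accumulator `x(t) = ∫₀ᵗ r(τ) dτ`. -/
noncomputable def xacc {m n : ℕ} (G : Matrix (Fin m) (Fin n) ℂ) (b : Evec n) (t : ℝ) :
    Evec n :=
  ∫ τ in (0:ℝ)..t, rblock (wdyn G b τ)

noncomputable def rCLM (n m : ℕ) : Jvec n m →L[ℂ] Evec n :=
  LinearMap.toContinuousLinearMap
    { toFun := rblock
      map_add' := fun _ _ => rfl
      map_smul' := fun _ _ => rfl }

noncomputable def sCLM (n m : ℕ) : Jvec n m →L[ℂ] Evec m :=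
  LinearMap.toContinuousLinearMap
    { toFun := sblock
      map_add' := fun _ _ => rfl
      map_smul' := fun _ _ => rfl }

lemma matCLM_apply {α β : Type*} [Fintype α] [Fintype β] [DecidableEq β]
    (A : Matrix α β ℂ) (v : EuclideanSpace ℂ β) (i : α) :
    matCLM A v i = (A *ᵥ (fun j => v j)) i := rfl

lemma matCLM_mul {α β γ : Type*} [Fintype α] [Fintype β] [Fintype γ]
    [DecidableEq β] [DecidableEq γ]
    (A : Matrix α β ℂ) (B : Matrix β γ ℂ) (v : EuclideanSpace ℂ γ) :
    matCLM (A * B) v = matCLM A (matCLM B v) := by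
  ext i
  simp only [matCLM_apply]
  rw [← Matrix.mulVec_mulVec]

lemma rblock_matCLM_blockM {m n : ℕ} (G : Matrix (Fin m) (Fin n) ℂ) (w : Jvec n m) :
    rblock (matCLM (blockM G) w) = -(matCLM Gᴴ (sblock w)) := by
  ext i
  have hw : (fun k => w k) = Sum.elim (fun i => w (Sum.inl i)) (fun j => w (Sum.inr j)) := by
    funext k; cases k <;> rfl
  simp only [rblock, matCLM_apply, blockM]
  rw [show (fun k => w k) = Sum.elim (fun i => w (Sum.inl i)) (fun j => w (Sum.inr j)) from hw,
    Matrix.fromBlocks_mulVec]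
  simp [Matrix.neg_mulVec, sblock, matCLM_apply]

lemma sblock_matCLM_blockM {m n : ℕ} (G : Matrix (Fin m) (Fin n) ℂ) (w : Jvec n m) :
    sblock (matCLM (blockM G) w) = matCLM G (rblock w) - sblock w := by
  ext j
  have hw : (fun k => w k) = Sum.elim (fun i => w (Sum.inl i)) (fun j => w (Sum.inr j)) := by
    funext k; cases k <;> rfl
  simp only [sblock, matCLM_apply, blockM]
  rw [show (fun k => w k) = Sum.elim (fun i => w (Sum.inl i)) (fun j => w (Sum.inr j)) from hw,
    Matrix.fromBlocks_mulVec]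
  simp [Matrix.neg_mulVec, rblock, matCLM_apply, sub_eq_add_neg]

lemma rCLM_apply {n m : ℕ} (w : Jvec n m) : rCLM n m w = rblock w := rfl
lemma sCLM_apply {n m : ℕ} (w : Jvec n m) : sCLM n m w = sblock w := rfl

lemma wdyn_hasDerivAt {m n : ℕ} (G : Matrix (Fin m) (Fin n) ℂ) (b : Evec n) (t : ℝ) :
    HasDerivAt (wdyn G b) (matCLM (blockM G) (wdyn G b t)) t := by
  set A := matCLM (blockM G) with hA
  have h := hasDerivAt_exp_smul_const' (𝕂 := ℝ) A t
  have h2 := ((ContinuousLinearMap.apply ℂ (Jvec n m)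
      (joinV b 0)).restrictScalars ℝ).hasFDerivAt.comp_hasDerivAt t h
  exact h2

lemma wdyn_continuous {m n : ℕ} (G : Matrix (Fin m) (Fin n) ℂ) (b : Evec n) :
    Continuous (wdyn G b) :=
  continuous_iff_continuousAt.2 fun t => (wdyn_hasDerivAt G b t).continuousAt

lemma xacc_hasDerivAt {m n : ℕ} (G : Matrix (Fin m) (Fin n) ℂ) (b : Evec n) (t : ℝ) :
    HasDerivAt (xacc G b) (rblock (wdyn G b t)) t := by
  have hc : Continuous fun τ => rblock (wdyn G b τ) :=
    (rCLM n m).continuous.comp (wdyn_continuous G b)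
  exact intervalIntegral.integral_hasDerivAt_right
    (hc.intervalIntegrable _ _)
    (hc.stronglyMeasurable.stronglyMeasurableAtFilter)
    hc.continuousAt

lemma wdyn_zero {m n : ℕ} (G : Matrix (Fin m) (Fin n) ℂ) (b : Evec n) :
    wdyn G b 0 = joinV b 0 := by
  unfold wdyn expM
  rw [show (0:ℝ) • matCLM (blockM G) = 0 by ext w; simp, NormedSpace.exp_zero,
    ContinuousLinearMap.one_apply]

lemma rblock_joinV {n m : ℕ} (r : Evec n) (s : Evec m) : rblock (joinV r s) = r := rfl
lemma sblock_joinV {n m : ℕ} (r : Evec n) (s : Evec m) : sblock (joinV r s) = s := rfl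

theorem stmt9_algebraic_residual_identity {m n : ℕ} (hm : 0 < m) (hn : 0 < n)
    (G : Matrix (Fin m) (Fin n) ℂ) (b : Evec n) :
    ∀ t : ℝ, 0 ≤ t →
      b - matCLM (Gᴴ * G) (xacc G b t) =
        rblock (wdyn G b t) - matCLM Gᴴ (sblock (wdyn G b t)) ∧
      rblock (wdyn G b t) =
        b - matCLM Gᴴ (matCLM G (xacc G b t) - sblock (wdyn G b t)) ∧
      sblock (wdyn G b t) =
        matCLM G (xacc G b t) - (matCLM G (xacc G b t) - sblock (wdyn G b t)) := by
  set L : Jvec n m →L[ℂ] Evec n := rCLM n m - (matCLM Gᴴ).comp (sCLM n m) with hL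
  set f : ℝ → Evec n := fun t => L (wdyn G b t) + matCLM (Gᴴ * G) (xacc G b t) with hf
  have hLapp : ∀ w : Jvec n m, L w = rblock w - matCLM Gᴴ (sblock w) := fun w => rfl
  have hderiv : ∀ t : ℝ, HasDerivAt f 0 t := by
    intro t
    have h1 : HasDerivAt (fun t => L (wdyn G b t))
        (L (matCLM (blockM G) (wdyn G b t))) t :=
      (L.restrictScalars ℝ).hasFDerivAt.comp_hasDerivAt t (wdyn_hasDerivAt G b t)
    have h2 : HasDerivAt (fun t => matCLM (Gᴴ * G) (xacc G b t))
        (matCLM (Gᴴ * G) (rblock (wdyn G b t))) t :=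
      ((matCLM (Gᴴ * G)).restrictScalars ℝ).hasFDerivAt.comp_hasDerivAt t
        (xacc_hasDerivAt G b t)
    have hsum := h1.add h2
    have hzero : L (matCLM (blockM G) (wdyn G b t)) +
        matCLM (Gᴴ * G) (rblock (wdyn G b t)) = 0 := by
      rw [hLapp, rblock_matCLM_blockM, sblock_matCLM_blockM, map_sub, matCLM_mul]
      abel
    rwa [hzero] at hsum
  have hconst : ∀ t : ℝ, f t = f 0 := by
    intro t
    exact is_const_of_deriv_eq_zero (fun u => (hderiv u).differentiableAt)
      (fun u => (hderiv u).deriv) t 0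
  have hf0 : f 0 = b := by
    simp [hf, hLapp, wdyn_zero, rblock_joinV, sblock_joinV, xacc,
      intervalIntegral.integral_same]
  intro t _
  have hkey : rblock (wdyn G b t) - matCLM Gᴴ (sblock (wdyn G b t)) +
      matCLM (Gᴴ * G) (xacc G b t) = b := by
    have := hconst t
    rw [hf0] at this
    rw [← hLapp]; exact this
  set r := rblock (wdyn G b t) with hr
  set s := sblock (wdyn G b t) with hs
  set x := xacc G b t with hx
  refine ⟨?_, ?_, (sub_sub_cancel _ _).symm⟩
  · rw [← hkey]; abel
  · rw [map_sub, ← matCLM_mul, ← hkey]; abel
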